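/- Let k_1, k_2 be positive integers of the same parity, r_i = ⌈(k_i+1)/2⌉, and σ_{k,h} defined combinatorially as in the β-Hermite minor process (σ_{k,h} = k·|C_{k-1}^h| where C_{k-1}^h is the set of ±1-paths of length k-1 from 1 to 2h-1+[k even]). Then ∑_{h=1}^{min(r_1,r_2)} σ_{k_1,h}·σ_{k_2,h} = (2 k_1 k_2 / (k_1+k_2)) · binom(k_1+k_2-2, (k_1+k_2-2)/2) = k_1 k_2 · C_{(k_1+k_2-2)/2}. -/

import Mathlib

/-- ±1-step paths with `n` steps (`n+1` vertices) on the positive integers,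
starting at 1 and ending at `e`. -/
def PMPath (n e : ℕ) : Type :=
  {i : Fin (n + 1) → ℕ //
    (∀ j, 1 ≤ i j) ∧
    (∀ j : Fin n, ((i j.castSucc : ℤ) - i j.succ).natAbs = 1) ∧
    i 0 = 1 ∧ i (Fin.last n) = e}


/-- `σ_{k,h} = k·|C_{k-1}^h|` where `C_{k-1}^h` is the set of ±1-paths of length `k-1`
on the positive integers from `1` to `2h-1` (`k` odd) resp. `2h` (`k` even). -/
noncomputable def sigma (k h : ℕ) : ℕ :=
  k * Nat.card (PMPath (k - 1) (if Odd k then 2 * h - 1 else 2 * h))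


open List DyckStep

/-- Flip a Dyck step. -/
def dflip : DyckStep → DyckStep | U => D | D => U

@[simp] lemma dflip_dflip (s : DyckStep) : dflip (dflip s) = s := by cases s <;> rfl

@[simp] lemma count_U_map_dflip (l : List DyckStep) : (l.map dflip).count U = l.count D := by
  induction l with
  | nil => rfl
  | cons a t ih => cases a <;> simp [dflip, List.count_cons, ih]

@[simp] lemma count_D_map_dflip (l : List DyckStep) : (l.map dflip).count D = l.count U := by
  induction l with
  | nil => rfl
  | cons a t ih => cases a <;> simp [dflip, List.count_cons, ih]

lemma count_U_add_count_D (l : List DyckStep) : l.count U + l.count D = l.length := by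
  induction l with
  | nil => rfl
  | cons a t ih => cases a <;> simp [List.count_cons] <;> omega

/-- Lists encoding ±1 paths of length `n` from 1 to `e` staying positive. -/
def LW (n e : ℕ) : Type :=
  {l : List DyckStep // l.length = n ∧ (∀ i, (l.take i).count D ≤ (l.take i).count U) ∧
    1 + l.count U = e + l.count D}

instance : Fintype DyckStep := ⟨{U, D}, by intro s; cases s <;> simp⟩

instance LW.finite (n e : ℕ) : Finite (LW n e) := by
  have h : {l : List DyckStep | l.length = n}.Finite := List.finite_length_eq _ _
  haveI := h.to_subtype
  exact Finite.of_injective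
    (fun x : LW n e => (⟨x.1, x.2.1⟩ : {l : List DyckStep | l.length = n}))
    (fun a b hab => Subtype.ext (by simpa [Subtype.ext_iff] using hab))

/-- height/count invariant along a list of steps -/
lemma count_invariant (l : List DyckStep) (g : ℕ → ℕ) (h0 : g 0 = 1)
    (hstep : ∀ j, (hj : j < l.length) →
      (l[j] = U → g (j+1) = g j + 1) ∧ (l[j] = D → g (j+1) + 1 = g j)) :
    ∀ j, j ≤ l.length → g j + (l.take j).count D = 1 + (l.take j).count U := by
  intro j
  induction j with
  | zero => intro _; simpa using h0
  | succ j ih =>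
    intro hj
    have hj' : j < l.length := by omega
    have ht : l.take (j+1) = l.take j ++ [l[j]] := by
      rw [List.take_succ]
      simp [List.getElem?_eq_getElem hj']
    have := ih (by omega)
    rcases (l[j]).dichotomy with h | h
    · have := (hstep j hj').1 h
      rw [ht, h] at *
      simp only [List.count_append, List.count_singleton] at *
      simp_all
      omega
    · have := (hstep j hj').2 h
      rw [ht, h] at *
      simp only [List.count_append, List.count_singleton] at *
      simp_all
      omega

/-- the step list of a path -/
def pathList (n : ℕ) (i : Fin (n+1) → ℕ) : List DyckStep :=
  List.ofFn (fun j : Fin n => if i j.castSucc < i j.succ then U else D)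

lemma pathList_length (n : ℕ) (i : Fin (n+1) → ℕ) : (pathList n i).length = n :=
  List.length_ofFn

lemma path_invariant (n : ℕ) (i : Fin (n+1) → ℕ)
    (hstep : ∀ j : Fin n, ((i j.castSucc : ℤ) - i j.succ).natAbs = 1)
    (h0 : i 0 = 1) :
    ∀ j, (hj : j ≤ n) → (i ⟨j, by omega⟩) + ((pathList n i).take j).count D
       = 1 + ((pathList n i).take j).count U := by
  have key := count_invariant (pathList n i)
    (fun j => if h : j ≤ n then i ⟨j, by omega⟩ else 0) ?_ ?_
  · intro j hj
    have := key j (by rw [pathList_length]; exact hj)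
    simp only [dif_pos hj] at this
    exact this
  · simp only [dif_pos (Nat.zero_le n)]
    simpa [show (⟨0, by omega⟩ : Fin (n+1)) = 0 from by ext; simp] using h0
  · intro j hj
    rw [pathList_length] at hj
    have hget : (pathList n i)[j]'(by rw [pathList_length]; exact hj)
        = if i (⟨j, hj⟩ : Fin n).castSucc < i (⟨j, hj⟩ : Fin n).succ then U else D := by
      simp [pathList]
    have hd := hstep ⟨j, hj⟩
    rcases Int.natAbs_eq_iff.mp hd with h | h
    all_goals {
      constructor <;> intro hUD <;>
      · rw [hget] at hUD
        simp only [dif_pos (by omega : j ≤ n), dif_pos (by omega : j + 1 ≤ n)]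
        have hc : (⟨j, hj⟩ : Fin n).castSucc = (⟨j, by omega⟩ : Fin (n+1)) := rfl
        have hs : (⟨j, hj⟩ : Fin n).succ = (⟨j+1, by omega⟩ : Fin (n+1)) := rfl
        rw [hc, hs] at h hUD
        split_ifs at hUD with hlt
        all_goals simp_all
        all_goals omega
    }

lemma take_all_of_eq {l : List DyckStep} {n : ℕ} (h : l.length = n) : l.take n = l :=
  List.take_of_length_le (le_of_eq h)

noncomputable def pmEquivLW (n e : ℕ) : PMPath n e ≃ LW n e where
  toFun p :=
    ⟨pathList n p.1, pathList_length n p.1, by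
      intro j
      rcases le_or_gt j n with hj | hj
      · have h1 := path_invariant n p.1 p.2.2.1 p.2.2.2.1 j hj
        have hpos := p.2.1 ⟨j, by omega⟩
        omega
      · rw [List.take_of_length_le (by rw [pathList_length]; omega)]
        have h1 := path_invariant n p.1 p.2.2.1 p.2.2.2.1 n le_rfl
        rw [take_all_of_eq (pathList_length n p.1)] at h1
        have hpos := p.2.1 ⟨n, by omega⟩
        omega, by
      have h1 := path_invariant n p.1 p.2.2.1 p.2.2.2.1 n le_rfl
      rw [take_all_of_eq (pathList_length n p.1)] at h1
      have hlast : p.1 ⟨n, by omega⟩ = e := p.2.2.2.2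
      omega⟩
  invFun l :=
    ⟨fun j => 1 + (l.1.take j.1).count U - (l.1.take j.1).count D, by
      intro j
      have := l.2.2.1 j.1
      show 1 ≤ 1 + (l.1.take j.1).count U - (l.1.take j.1).count D
      omega, by
      intro j
      have hj : (j : ℕ) < l.1.length := by rw [l.2.1]; exact j.isLt
      have ht : l.1.take ((j : ℕ)+1) = l.1.take (j : ℕ) ++ [l.1[(j : ℕ)]] := by
        rw [List.take_succ]; simp [List.getElem?_eq_getElem hj]
      have hc : ((j.castSucc : Fin (n+1)) : ℕ) = (j : ℕ) := rfl
      have hs : ((j.succ : Fin (n+1)) : ℕ) = (j : ℕ) + 1 := rfl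
      simp only [hc, hs]
      have h1 := l.2.2.1 (j : ℕ)
      have h2 := l.2.2.1 ((j : ℕ) + 1)
      rcases (l.1[(j : ℕ)]).dichotomy with h | h <;> rw [h] at ht <;>
        [ (have e1 : (l.1.take ((j:ℕ)+1)).count U = (l.1.take (j:ℕ)).count U + 1 := by
            rw [ht]; simp
           have e2 : (l.1.take ((j:ℕ)+1)).count D = (l.1.take (j:ℕ)).count D := by
            rw [ht]; simp);
          (have e1 : (l.1.take ((j:ℕ)+1)).count U = (l.1.take (j:ℕ)).count U := by
            rw [ht]; simp
           have e2 : (l.1.take ((j:ℕ)+1)).count D = (l.1.take (j:ℕ)).count D + 1 := by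
            rw [ht]; simp)] <;>
      · rw [e1, e2] at h2 ⊢
        omega, by
      simp, by
      have h1 := l.2.2.1 n
      have h2 := l.2.2.2
      simp only [Fin.val_last]
      rw [take_all_of_eq l.2.1] at h1 ⊢
      omega⟩
  left_inv p := by
    apply Subtype.ext
    funext j
    have h1 := path_invariant n p.1 p.2.2.1 p.2.2.2.1 j.1 (by omega)
    have hpos := p.2.1 j
    simp only [Fin.eta] at h1
    simp only []
    omega
  right_inv l := by
    apply Subtype.ext
    apply List.ext_getElem (by rw [pathList_length, l.2.1])
    intro j hj1 hj2
    have hjn : j < n := by rwa [pathList_length] at hj1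
    have hget : (pathList n _)[j]'hj1
        = if (1 + (l.1.take j).count U - (l.1.take j).count D : ℕ)
            < (1 + (l.1.take (j+1)).count U - (l.1.take (j+1)).count D : ℕ) then U else D := by
      simp [pathList]
    rw [hget]
    have ht : l.1.take (j+1) = l.1.take j ++ [l.1[j]] := by
      rw [List.take_succ]; simp [List.getElem?_eq_getElem hj2]
    have h1 := l.2.2.1 j
    rcases (l.1[j]).dichotomy with h | h <;> rw [h] at ht
    · have e1 : (l.1.take (j+1)).count U = (l.1.take j).count U + 1 := by rw [ht]; simp
      have e2 : (l.1.take (j+1)).count D = (l.1.take j).count D := by rw [ht]; simp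
      rw [e1, e2, if_pos (by omega)]
      exact h.symm
    · have e1 : (l.1.take (j+1)).count U = (l.1.take j).count U := by rw [ht]; simp
      have e2 : (l.1.take (j+1)).count D = (l.1.take j).count D + 1 := by rw [ht]; simp
      rw [e1, e2, if_neg (by omega)]
      exact h.symm

def lwEquivDyck (c : ℕ) : LW (2 * c) 1 ≃ {p : DyckWord // p.semilength = c} where
  toFun l :=
    ⟨⟨l.1, by have := l.2.2.2; omega, l.2.2.1⟩, by
      have h1 := l.2.2.2
      have h2 := count_U_add_count_D l.1
      have h3 := l.2.1
      simp only [DyckWord.semilength]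
      omega⟩
  invFun p :=
    ⟨p.1.toList, by
      have := p.1.count_U_eq_count_D
      have := count_U_add_count_D p.1.toList
      have h2 := p.2
      simp only [DyckWord.semilength] at h2
      omega, p.1.count_D_le_count_U, by have := p.1.count_U_eq_count_D; omega⟩
  left_inv l := rfl
  right_inv p := rfl

lemma card_LW_dyck (c : ℕ) : Nat.card (LW (2 * c) 1) = catalan c := by
  rw [Nat.card_congr (lwEquivDyck c), Nat.card_eq_fintype_card]
  exact_mod_cast DyckWord.card_dyckWord_semilength_eq_catalan c

lemma count_take_flip_rev (b : List DyckStep) (i : ℕ) :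
    ((b.reverse.map dflip).take i).count D = (b.drop (b.length - i)).count U ∧
    ((b.reverse.map dflip).take i).count U = (b.drop (b.length - i)).count D := by
  rw [← List.map_take, List.take_reverse]
  constructor
  · rw [count_D_map_dflip, List.count_reverse]
  · rw [count_U_map_dflip, List.count_reverse]

lemma sigmaExt {α : Type*} {N : ℕ} {P Q : Fin N → α → Prop}
    {x y : Σ e : Fin N, {l // P e l} × {l // Q e l}}
    (h1 : x.1 = y.1) (h2 : x.2.1.1 = y.2.1.1) (h3 : x.2.2.1 = y.2.2.1) : x = y := by
  obtain ⟨e, a, b⟩ := x; obtain ⟨f, c, d⟩ := y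
  dsimp at h1 h2 h3
  subst h1
  simp_all [Prod.ext_iff, Subtype.ext_iff]

def lwA (n m : ℕ) (l : LW (n + m) 1) :
    LW n (1 + (l.1.take n).count U - (l.1.take n).count D) :=
  ⟨l.1.take n, by
      refine ⟨by rw [List.length_take, l.2.1]; omega, fun i => ?_, ?_⟩
      · rw [List.take_take]
        exact l.2.2.1 _
      · have h1 := l.2.2.1 n
        have h2 : (l.1.take n).count U + (l.1.take n).count D = n := by
          have := count_U_add_count_D (l.1.take n)
          rw [List.length_take, l.2.1] at this; omega
        omega⟩

def lwB (n m : ℕ) (l : LW (n + m) 1) :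
    LW m (1 + (l.1.take n).count U - (l.1.take n).count D) :=
  ⟨(l.1.drop n).reverse.map dflip, by
      refine ⟨by rw [List.length_map, List.length_reverse, List.length_drop, l.2.1]; omega,
        fun i => ?_, ?_⟩
      · obtain ⟨hD, hU⟩ := count_take_flip_rev (l.1.drop n) i
        rw [hD, hU]
        set j := (l.1.drop n).length - i with hj
        have hsplit : l.1.take (n + j) = l.1.take n ++ (l.1.drop n).take j :=
          List.take_add (l := l.1) (i := n) (j := j)
        have hpre := l.2.2.1 (n + j)
        rw [hsplit, List.count_append, List.count_append] at hpre
        have hU1 : ((l.1.drop n).take j).count U + ((l.1.drop n).drop j).count U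
            = (l.1.drop n).count U := by
          rw [← List.count_append, List.take_append_drop]
        have hD1 : ((l.1.drop n).take j).count D + ((l.1.drop n).drop j).count D
            = (l.1.drop n).count D := by
          rw [← List.count_append, List.take_append_drop]
        have htot := l.2.2.2
        have hsU : (l.1.take n).count U + (l.1.drop n).count U = l.1.count U := by
          rw [← List.count_append, List.take_append_drop]
        have hsD : (l.1.take n).count D + (l.1.drop n).count D = l.1.count D := by
          rw [← List.count_append, List.take_append_drop]
        omega
      · rw [count_U_map_dflip, count_D_map_dflip, List.count_reverse, List.count_reverse]
        have htot := l.2.2.2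
        have hsU : (l.1.take n).count U + (l.1.drop n).count U = l.1.count U := by
          rw [← List.count_append, List.take_append_drop]
        have hsD : (l.1.take n).count D + (l.1.drop n).count D = l.1.count D := by
          rw [← List.count_append, List.take_append_drop]
        have hpre := l.2.2.1 n
        have h2 : (l.1.take n).count U + (l.1.take n).count D = n := by
          have := count_U_add_count_D (l.1.take n)
          rw [List.length_take, l.2.1] at this; omega
        omega⟩

def lwSplitFun (n m : ℕ) (l : LW (n + m) 1) : Σ e : Fin (n + 2), LW n e × LW m e :=
  ⟨⟨1 + (l.1.take n).count U - (l.1.take n).count D, by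
      have h1 : (l.1.take n).count U + (l.1.take n).count D = (l.1.take n).length :=
        count_U_add_count_D _
      have h2 : (l.1.take n).length = n := by rw [List.length_take, l.2.1]; omega
      omega⟩,
   lwA n m l, lwB n m l⟩

def lwSplitInv (n m : ℕ) (x : Σ e : Fin (n + 2), LW n e × LW m e) : LW (n + m) 1 :=
  ⟨x.2.1.1 ++ x.2.2.1.reverse.map dflip, by
    obtain ⟨e, a, b⟩ := x
    dsimp only
    refine ⟨by rw [List.length_append, List.length_map, List.length_reverse, a.2.1, b.2.1],
      fun i => ?_, ?_⟩
    · rw [List.take_append, List.count_append, List.count_append]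
      obtain ⟨hD, hU⟩ := count_take_flip_rev b.1 (i - a.1.length)
      rw [hD, hU]
      rcases le_or_gt i a.1.length with hi | hi
      · have h0 : b.1.length - (i - a.1.length) = b.1.length := by omega
        rw [h0, List.drop_length]
        simpa using a.2.2.1 i
      · have hta : a.1.take i = a.1 := List.take_of_length_le (le_of_lt hi)
        rw [hta]
        set j := b.1.length - (i - a.1.length) with hj
        have hpb := b.2.2.1 j
        have hU1 : (b.1.take j).count U + (b.1.drop j).count U = b.1.count U := by
          rw [← List.count_append, List.take_append_drop]
        have hD1 : (b.1.take j).count D + (b.1.drop j).count D = b.1.count D := by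
          rw [← List.count_append, List.take_append_drop]
        have hea := a.2.2.2
        have heb := b.2.2.2
        omega
    · rw [List.count_append, List.count_append, count_U_map_dflip, count_D_map_dflip,
        List.count_reverse, List.count_reverse]
      have hea := a.2.2.2
      have heb := b.2.2.2
      omega⟩

def lwSplit (n m : ℕ) : LW (n + m) 1 ≃ Σ e : Fin (n + 2), LW n e × LW m e where
  toFun := lwSplitFun n m
  invFun := lwSplitInv n m
  left_inv l := by
    apply Subtype.ext
    show l.1.take n ++ ((l.1.drop n).reverse.map dflip).reverse.map dflip = l.1
    rw [← List.map_reverse, List.reverse_reverse, List.map_map]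
    simp [Function.comp_def, List.take_append_drop]
  right_inv x := by
    obtain ⟨e, a, b⟩ := x
    have hw1 : (a.1 ++ b.1.reverse.map dflip).take n = a.1 := by
      rw [List.take_append, List.take_of_length_le (le_of_eq a.2.1),
        a.2.1, Nat.sub_self, List.take_zero, List.append_nil]
    have hw2 : (a.1 ++ b.1.reverse.map dflip).drop n = b.1.reverse.map dflip := by
      rw [List.drop_append, List.drop_of_length_le (le_of_eq a.2.1),
        a.2.1, Nat.sub_self, List.drop_zero, List.nil_append]
    apply sigmaExt
    · show (⟨1 + _ - _, _⟩ : Fin (n+2)) = e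
      apply Fin.ext
      show 1 + ((a.1 ++ b.1.reverse.map dflip).take n).count U
          - ((a.1 ++ b.1.reverse.map dflip).take n).count D = (e : ℕ)
      rw [hw1]
      have hea := a.2.2.2
      have hpa := a.2.2.1 n
      rw [List.take_of_length_le (le_of_eq a.2.1)] at hpa
      omega
    · show (a.1 ++ b.1.reverse.map dflip).take n = a.1
      exact hw1
    · show ((a.1 ++ b.1.reverse.map dflip).drop n).reverse.map dflip = b.1
      rw [hw2, ← List.map_reverse, List.reverse_reverse, List.map_map]
      simp [Function.comp_def]

lemma card_LW_split (n m : ℕ) :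
    Nat.card (LW (n + m) 1)
      = ∑ e ∈ Finset.range (n + 2), Nat.card (LW n e) * Nat.card (LW m e) := by
  classical
  letI : ∀ (k e : ℕ), Fintype (LW k e) := fun _ _ => Fintype.ofFinite _
  rw [Nat.card_congr (lwSplit n m), Nat.card_eq_fintype_card, Fintype.card_sigma,
    ← Fin.sum_univ_eq_sum_range (fun e => Nat.card (LW n e) * Nat.card (LW m e))]
  congr 1
  funext e
  rw [Fintype.card_prod, Nat.card_eq_fintype_card, Nat.card_eq_fintype_card]

lemma LW_empty (n e : ℕ) (h : ¬(1 ≤ e ∧ e ≤ n + 1 ∧ (n + 1) % 2 = e % 2)) :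
    Nat.card (LW n e) = 0 := by
  have : IsEmpty (LW n e) := by
    refine ⟨fun l => h ?_⟩
    have h1 := l.2.2.2
    have h2 := count_U_add_count_D l.1
    have h3 := l.2.2.1 n
    rw [List.take_of_length_le (le_of_eq l.2.1)] at h3
    rw [l.2.1] at h2
    omega
  simp [Nat.card_of_isEmpty]

/-- For positive integers `k₁, k₂` of the same parity with
`rᵢ = ⌈(kᵢ+1)/2⌉`,
`∑_{h=1}^{min(r₁,r₂)} σ_{k₁,h}·σ_{k₂,h} = (2k₁k₂/(k₁+k₂))·C(k₁+k₂-2, (k₁+k₂-2)/2)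
 = k₁k₂·Catalan((k₁+k₂-2)/2)`. -/
theorem sum_sigma_mul_sigma (k₁ k₂ : ℕ) (h₁ : 0 < k₁) (h₂ : 0 < k₂)
    (hpar : k₁ % 2 = k₂ % 2) :
    (∑ h ∈ Finset.Icc 1 (min ((k₁ + 2) / 2) ((k₂ + 2) / 2)), sigma k₁ h * sigma k₂ h
      = k₁ * k₂ * catalan ((k₁ + k₂ - 2) / 2)) ∧
    ((∑ h ∈ Finset.Icc 1 (min ((k₁ + 2) / 2) ((k₂ + 2) / 2)),
        sigma k₁ h * sigma k₂ h : ℝ)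
      = 2 * k₁ * k₂ / (k₁ + k₂) *
          ((k₁ + k₂ - 2).choose ((k₁ + k₂ - 2) / 2))) := by
  set n := k₁ - 1 with hn
  set m := k₂ - 1 with hm
  set c := (k₁ + k₂ - 2) / 2 with hc
  set M := min ((k₁ + 2) / 2) ((k₂ + 2) / 2) with hM
  have hodd : Odd k₂ ↔ Odd k₁ := by
    rw [Nat.odd_iff, Nat.odd_iff, hpar]
  set E : ℕ → ℕ := fun h => if Odd k₁ then 2 * h - 1 else 2 * h with hE
  have hnm : n + m = 2 * c := by
    rcases Nat.even_or_odd k₁ with he | he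
    · have : k₁ % 2 = 0 := Nat.even_iff.mp he
      omega
    · have : k₁ % 2 = 1 := Nat.odd_iff.mp he
      omega
  -- step 1 : the sum equals k₁ * k₂ * ∑ over list counts
  have step1 : ∑ h ∈ Finset.Icc 1 M, sigma k₁ h * sigma k₂ h
      = k₁ * k₂ * ∑ h ∈ Finset.Icc 1 M, Nat.card (LW n (E h)) * Nat.card (LW m (E h)) := by
    rw [Finset.mul_sum]
    refine Finset.sum_congr rfl fun h _ => ?_
    unfold sigma
    rw [Nat.card_congr (pmEquivLW _ _), Nat.card_congr (pmEquivLW _ _),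
      if_congr hodd rfl rfl]
    show k₁ * Nat.card (LW n (E h)) * (k₂ * Nat.card (LW m (E h))) = _
    ring
  -- step 2 : reindex
  have step2 : ∑ h ∈ Finset.Icc 1 M, Nat.card (LW n (E h)) * Nat.card (LW m (E h))
      = ∑ e ∈ Finset.range (n + 4), Nat.card (LW n e) * Nat.card (LW m e) := by
    have hEo : ∀ a, Odd k₁ → E a = 2 * a - 1 := fun a ha => by
      simp only [hE, if_pos ha]
    have hEe : ∀ a, ¬ Odd k₁ → E a = 2 * a := fun a ha => by
      simp only [hE, if_neg ha]
    refine Finset.sum_bij_ne_zero (fun h _ _ => E h) ?_ ?_ ?_ ?_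
    · intro a ha hne
      simp only [Finset.mem_range]
      simp only [Finset.mem_Icc] at ha
      have hf1 : Nat.card (LW n (E a)) ≠ 0 := fun h0 => hne (by rw [h0, zero_mul])
      have hb1 : 1 ≤ E a ∧ E a ≤ n + 1 ∧ (n + 1) % 2 = E a % 2 := by
        by_contra hcon; exact hf1 (LW_empty n (E a) hcon)
      omega
    · intro a ha _ b hb _ hab
      simp only [Finset.mem_Icc] at ha hb
      rcases Nat.even_or_odd k₁ with hp | hp
      · rw [hEe a (Nat.not_odd_iff_even.mpr hp), hEe b (Nat.not_odd_iff_even.mpr hp)] at hab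
        omega
      · rw [hEo a hp, hEo b hp] at hab
        omega
    · intro e he hne
      simp only [Finset.mem_range] at he
      have hf1 : Nat.card (LW n e) ≠ 0 := fun h0 => hne (by rw [h0, zero_mul])
      have hf2 : Nat.card (LW m e) ≠ 0 := fun h0 => hne (by rw [h0, mul_zero])
      have hb1 : 1 ≤ e ∧ e ≤ n + 1 ∧ (n + 1) % 2 = e % 2 := by
        by_contra hcon; exact hf1 (LW_empty n e hcon)
      have hb2 : 1 ≤ e ∧ e ≤ m + 1 ∧ (m + 1) % 2 = e % 2 := by
        by_contra hcon; exact hf2 (LW_empty m e hcon)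
      rcases Nat.even_or_odd k₁ with hpk | hpk
      · have h2 : k₁ % 2 = 0 := Nat.even_iff.mp hpk
        have hEv : E (e / 2) = e := by
          rw [hEe (e / 2) (Nat.not_odd_iff_even.mpr hpk)]
          omega
        exact ⟨e / 2, by simp only [Finset.mem_Icc, hM]; omega,
          by rw [hEv]; exact hne, hEv⟩
      · have h2 : k₁ % 2 = 1 := Nat.odd_iff.mp hpk
        have hEv : E ((e + 1) / 2) = e := by
          rw [hEo ((e + 1) / 2) hpk]
          omega
        exact ⟨(e + 1) / 2, by simp only [Finset.mem_Icc, hM]; omega,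
          by rw [hEv]; exact hne, hEv⟩
    · intro a _ _
      rfl
  have step3 : ∑ e ∈ Finset.range (n + 4), Nat.card (LW n e) * Nat.card (LW m e)
      = catalan c := by
    rw [Finset.sum_range_succ, LW_empty n (n + 3) (by omega), zero_mul, add_zero,
      Finset.sum_range_succ, LW_empty n (n + 2) (by omega), zero_mul, add_zero,
      ← card_LW_split n m, hnm, card_LW_dyck]
  have part1 : ∑ h ∈ Finset.Icc 1 M, sigma k₁ h * sigma k₂ h = k₁ * k₂ * catalan c := by
    rw [step1, step2, step3]
  refine ⟨part1, ?_⟩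
  have hck : k₁ + k₂ = 2 * c + 2 := by omega
  have hL := congrArg (Nat.cast : ℕ → ℝ) part1
  push_cast at hL
  rw [hL]
  have hchoose : (k₁ + k₂ - 2).choose c = (c + 1) * catalan c := by
    rw [show k₁ + k₂ - 2 = 2 * c from by omega, ← Nat.centralBinom_eq_two_mul_choose,
      ← succ_mul_catalan_eq_centralBinom]
  have hch := congrArg (Nat.cast : ℕ → ℝ) hchoose
  push_cast at hch
  rw [hch, show ((k₁ : ℝ) + k₂) = 2 * c + 2 from by exact_mod_cast hck]
  have hc0 : (2 * (c : ℝ) + 2) ≠ 0 := by positivity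
  field_simp
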